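/- Let H be an m × p real matrix whose columns h_i all have unit Euclidean norm, and let μ ≥ 0 be a real number such that |h_iᵀ h_j| ≤ μ for all i ≠ j. Let S be a set of column indices with |S| = s and suppose sμ < 1. Then G = H_Sᵀ H_S is invertible and, for every σ > 0, s·σ²/(1 + sμ) ≤ σ² · trace(G⁻¹) ≤ s·σ²/(1 − sμ). -/

import Mathlib

open Matrix

/-- If the columns of `H` have unit norm and coherence at most `μ`, with
`|S| = s` and `sμ < 1`, then `G = H_Sᵀ H_S` is invertible and
`s σ²/(1 + sμ) ≤ σ² trace(G⁻¹) ≤ s σ²/(1 − sμ)` for every `σ > 0`. -/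
theorem gram_trace_inverse_bounds
    {m p s : ℕ} (H : Matrix (Fin m) (Fin p) ℝ)
    (hnorm : ∀ j : Fin p, ∑ i, H i j ^ 2 = 1)
    (μ : ℝ) (hμ : 0 ≤ μ)
    (hcoh : ∀ j k : Fin p, j ≠ k → |∑ i, H i j * H i k| ≤ μ)
    (S : Finset (Fin p)) (hScard : S.card = s)
    (hsμ : (s : ℝ) * μ < 1)
    (G : Matrix S S ℝ)
    (hGdef : G = (H.submatrix id (fun j : S => (j : Fin p)))ᵀ *
      H.submatrix id (fun j : S => (j : Fin p))) :
    IsUnit G.det ∧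
      ∀ σ : ℝ, 0 < σ →
        (s : ℝ) * σ ^ 2 / (1 + (s : ℝ) * μ) ≤ σ ^ 2 * G⁻¹.trace ∧
          σ ^ 2 * G⁻¹.trace ≤ (s : ℝ) * σ ^ 2 / (1 - (s : ℝ) * μ) := by
  set A : Matrix (Fin m) S ℝ := H.submatrix id (fun j : S => (j : Fin p)) with hA
  have hcard : (Fintype.card S : ℕ) = s := by
    rw [Fintype.card_coe, hScard]
  -- entries of G
  have hGentry : ∀ j k : S, G j k = ∑ i, H i (j : Fin p) * H i (k : Fin p) := by
    intro j k
    simp [hGdef, hA, Matrix.mul_apply, Matrix.transpose_apply, Matrix.submatrix_apply]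
  have hGdiag : ∀ j : S, G j j = 1 := by
    intro j
    rw [hGentry]
    simpa [sq] using hnorm (j : Fin p)
  have hGoff : ∀ j k : S, j ≠ k → |G j k| ≤ μ := by
    intro j k hjk
    rw [hGentry]
    exact hcoh _ _ (fun h => hjk (Subtype.ext h))
  -- quadratic form written as a sum of squares
  have hquad : ∀ x y : S → ℝ, x ⬝ᵥ G *ᵥ y = (A *ᵥ x) ⬝ᵥ (A *ᵥ y) := by
    intro x y
    rw [hGdef, ← Matrix.mulVec_mulVec, dotProduct_mulVec, Matrix.vecMul_transpose]
  -- the key bound on the quadratic form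
  have hbound : ∀ x : S → ℝ,
      |x ⬝ᵥ G *ᵥ x - ∑ j, x j ^ 2| ≤ (s : ℝ) * μ * ∑ j, x j ^ 2 := by
    intro x
    have hQ : (0 : ℝ) ≤ ∑ j, x j ^ 2 :=
      Finset.sum_nonneg fun j _ => sq_nonneg _
    have hexp : x ⬝ᵥ G *ᵥ x = ∑ j, ∑ k, x j * G j k * x k := by
      simp [dotProduct, Matrix.mulVec, Finset.mul_sum, mul_assoc]
    have hdiagsplit : ∀ j : S,
        ∑ k, x j * G j k * x k
          = x j ^ 2 + ∑ k ∈ Finset.univ.erase j, x j * G j k * x k := by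
      intro j
      rw [← Finset.add_sum_erase _ _ (Finset.mem_univ j), hGdiag]
      ring_nf
    have hsplit : x ⬝ᵥ G *ᵥ x - ∑ j, x j ^ 2
        = ∑ j, ∑ k ∈ Finset.univ.erase j, x j * G j k * x k := by
      rw [hexp]
      rw [Finset.sum_congr rfl fun j _ => hdiagsplit j, Finset.sum_add_distrib]
      ring
    rw [hsplit]
    have habs : |∑ j, ∑ k ∈ Finset.univ.erase j, x j * G j k * x k|
        ≤ ∑ j, ∑ k ∈ Finset.univ.erase j, |x j| * μ * |x k| := by
      refine le_trans (Finset.abs_sum_le_sum_abs _ _) ?_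
      refine Finset.sum_le_sum fun j _ => ?_
      refine le_trans (Finset.abs_sum_le_sum_abs _ _) ?_
      refine Finset.sum_le_sum fun k hk => ?_
      have hjk : j ≠ k := (Finset.ne_of_mem_erase hk).symm
      rw [abs_mul, abs_mul]
      have := hGoff j k hjk
      have h1 : |x j| * |G j k| ≤ |x j| * μ :=
        mul_le_mul_of_nonneg_left this (abs_nonneg _)
      exact mul_le_mul_of_nonneg_right h1 (abs_nonneg _)
    refine le_trans habs ?_
    have hrewrite : ∑ j, ∑ k ∈ Finset.univ.erase j, |x j| * μ * |x k|
        = μ * ((∑ j, |x j|) ^ 2 - ∑ j, x j ^ 2) := by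
      have : ∀ j : S, ∑ k ∈ Finset.univ.erase j, |x j| * μ * |x k|
          = μ * (|x j| * ((∑ k, |x k|) - |x j|)) := by
        intro j
        rw [Finset.sum_erase_eq_sub (Finset.mem_univ j), ← Finset.mul_sum]
        ring
      rw [Finset.sum_congr rfl fun j _ => this j]
      rw [← Finset.mul_sum]
      congr 1
      rw [Finset.sum_congr rfl (fun j _ => mul_sub (|x j|) _ _), Finset.sum_sub_distrib]
      rw [← Finset.sum_mul, sq]
      congr 1
      exact Finset.sum_congr rfl fun j _ => by rw [← abs_mul, ← sq, abs_sq]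
    rw [hrewrite]
    have hcs : (∑ j, |x j|) ^ 2 ≤ (s : ℝ) * ∑ j, x j ^ 2 := by
      have := sq_sum_le_card_mul_sum_sq (s := (Finset.univ : Finset S)) (f := fun j => |x j|)
      simpa [hScard, Finset.card_univ, hcard, sq_abs] using this
    nlinarith [hQ, hμ, mul_le_mul_of_nonneg_left hcs hμ]
  have hsμ0 : (0:ℝ) ≤ (s:ℝ) * μ := mul_nonneg (Nat.cast_nonneg _) hμ
  -- quadratic form lower/upper bounds
  have hlow : ∀ x : S → ℝ, (1 - (s:ℝ)*μ) * ∑ j, x j ^ 2 ≤ x ⬝ᵥ G *ᵥ x := by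
    intro x
    have := (abs_le.mp (hbound x)).1
    nlinarith [this]
  have hup : ∀ x : S → ℝ, x ⬝ᵥ G *ᵥ x ≤ (1 + (s:ℝ)*μ) * ∑ j, x j ^ 2 := by
    intro x
    have := (abs_le.mp (hbound x)).2
    nlinarith [this]
  -- positive definiteness
  have hPD : G.PosDef := by
    rw [Matrix.posDef_iff_dotProduct_mulVec]
    constructor
    · rw [hGdef]
      exact Matrix.isHermitian_conjTranspose_mul_self A
    · intro x hx
      have hQpos : 0 < ∑ j, x j ^ 2 := by
        obtain ⟨j, hj⟩ := Function.ne_iff.mp hx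
        have hj' : x j ≠ 0 := by simpa using hj
        exact Finset.sum_pos' (fun k _ => sq_nonneg _)
          ⟨j, Finset.mem_univ j, by positivity⟩
      have := hlow x
      have hgoal : (0:ℝ) < x ⬝ᵥ G *ᵥ x := by nlinarith
      simpa using hgoal
  have hUnit : IsUnit G.det := by
    have := hPD.isUnit
    rwa [Matrix.isUnit_iff_isUnit_det] at this
  have hGinv : G * G⁻¹ = 1 := Matrix.mul_nonsing_inv _ hUnit
  -- per-entry bounds on the inverse's diagonal
  have key : ∀ i : S, 1 ≤ G⁻¹ i i ∧ G⁻¹ i i * (1 - (s:ℝ)*μ) ≤ 1 := by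
    intro i
    set e : S → ℝ := Pi.single i 1 with he
    set x : S → ℝ := G⁻¹ *ᵥ e with hx
    have hGx : G *ᵥ x = e := by
      rw [hx, Matrix.mulVec_mulVec, hGinv, Matrix.one_mulVec]
    have hxi : x i = G⁻¹ i i := by
      simp [hx, he, Matrix.mulVec, dotProduct, Pi.single_apply]
    have ht_eq : x ⬝ᵥ G *ᵥ x = x i := by
      rw [hGx, he]
      simp [dotProduct, Pi.single_apply]
    -- e ⬝ᵥ G e = 1
    have hqe : e ⬝ᵥ G *ᵥ e = 1 := by
      simp [he, Matrix.mulVec, dotProduct, Pi.single_apply, hGdiag i]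
    -- lower bound : 1 ≤ x i  via Cauchy-Schwarz in ℝ^m
    have hone : e ⬝ᵥ G *ᵥ x = 1 := by
      rw [hGx, he]
      simp [dotProduct, Pi.single_apply]
    have hcs : (e ⬝ᵥ G *ᵥ x) ^ 2 ≤ (e ⬝ᵥ G *ᵥ e) * (x ⬝ᵥ G *ᵥ x) := by
      rw [hquad e x, hquad e e, hquad x x]
      simp only [dotProduct]
      have := Finset.sum_mul_sq_le_sq_mul_sq Finset.univ (fun r => (A *ᵥ e) r)
        (fun r => (A *ᵥ x) r)
      calc (∑ r, (A *ᵥ e) r * (A *ᵥ x) r)^2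
          ≤ (∑ r, (A *ᵥ e) r ^ 2) * ∑ r, (A *ᵥ x) r ^ 2 := this
        _ = (∑ r, (A *ᵥ e) r * (A *ᵥ e) r) * ∑ r, (A *ᵥ x) r * (A *ᵥ x) r := by
            simp [sq]
    have hge1 : 1 ≤ x i := by
      rw [hone, hqe, ht_eq] at hcs
      nlinarith
    -- upper bound
    have hQx : (x i)^2 ≤ ∑ j, x j ^ 2 :=
      Finset.single_le_sum (f := fun j => x j ^ 2) (fun j _ => sq_nonneg _)
        (Finset.mem_univ i)
    have hlx := hlow x
    rw [ht_eq] at hlx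
    refine ⟨hxi ▸ hge1, ?_⟩
    rw [← hxi]
    nlinarith
  -- trace bounds
  have htr : G⁻¹.trace = ∑ i, G⁻¹ i i := by
    simp [Matrix.trace, Matrix.diag]
  have htr_low : (s:ℝ) ≤ G⁻¹.trace := by
    rw [htr]
    calc (s:ℝ) = ∑ _i : S, (1:ℝ) := by simp [Finset.card_univ, hcard, hScard]
      _ ≤ ∑ i, G⁻¹ i i := Finset.sum_le_sum fun i _ => (key i).1
  have htr_up : G⁻¹.trace * (1 - (s:ℝ)*μ) ≤ (s:ℝ) := by
    rw [htr, Finset.sum_mul]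
    calc ∑ i, G⁻¹ i i * (1 - (s:ℝ)*μ) ≤ ∑ _i : S, (1:ℝ) :=
          Finset.sum_le_sum fun i _ => (key i).2
      _ = (s:ℝ) := by simp [Finset.card_univ, hcard, hScard]
  refine ⟨hUnit, fun σ hσ => ?_⟩
  have hσ2 : (0:ℝ) < σ ^ 2 := by positivity
  have h1p : (0:ℝ) < 1 + (s:ℝ)*μ := by linarith
  have h1m : (0:ℝ) < 1 - (s:ℝ)*μ := by linarith
  constructor
  · rw [div_le_iff₀ h1p]
    nlinarith [mul_le_mul_of_nonneg_left htr_low hσ2.le]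
  · rw [le_div_iff₀ h1m]
    nlinarith [mul_le_mul_of_nonneg_left htr_up hσ2.le]
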